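/- Let $X_1,\dots,X_n$ be a centered Gaussian vector whose inverse covariance matrix has all eigenvalues in $[\lambda_1,\lambda_2]$ with $0<\lambda_1\le\lambda_2$, and let $D\subseteq\mathbb{R}$ be measurable with positive Lebesgue measure. Then $\mathbb{P}(X_i\in D,\ 1\le i\le n)\ge \left(\frac{\lambda_1}{\lambda_2}\right)^{n/2}\mathbb{P}(\mathcal{N}(0,1)\in\sqrt{\lambda_2}\,D)^n$. -/

import Mathlib

open MeasureTheory Real Set Matrix ProbabilityTheory
open scoped ENNReal Pointwise

/-- The (unnormalized) centered Gaussian measure on `Fin n → ℝ` with precision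
(inverse covariance) matrix `Q`, given by its density `exp(-x'Qx/2)`. -/
noncomputable def gaussPrec (n : ℕ) (Q : Matrix (Fin n) (Fin n) ℝ) :
    Measure (Fin n → ℝ) :=
  volume.withDensity fun x => ENNReal.ofReal (Real.exp (-(x ⬝ᵥ (Q *ᵥ x)) / 2))

/-- Fubini for a power of a single function over a finite product measure. -/
lemma lintegral_pi_pow_aux {α : Type*} [MeasurableSpace α] (μ : Measure α) [SigmaFinite μ]
    {f : α → ℝ≥0∞} (hf : Measurable f) :
    ∀ n : ℕ, ∫⁻ x : Fin n → α, ∏ i, f (x i) ∂(Measure.pi fun _ => μ)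
      = (∫⁻ t, f t ∂μ) ^ n := by
  intro n
  induction n with
  | zero => simp
  | succ n ih =>
    have hmp := (measurePreserving_piFinSuccAbove (fun _ : Fin (n + 1) => μ) 0).symm
    rw [hmp.lintegral_map_equiv (fun x => ∏ i, f (x i))
      (MeasurableEquiv.piFinSuccAbove (fun _ : Fin (n + 1) => α) 0).symm]
    simp only [MeasurableEquiv.piFinSuccAbove_symm_apply, Fin.insertNthEquiv,
      Fin.insertNth_zero, Fin.prod_univ_succ, Equiv.coe_fn_mk, Fin.cons_zero, Fin.cons_succ,
      Fin.zero_succAbove, cast_eq]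
    have hg : Measurable fun y : Fin n → α => ∏ x, f (y x) :=
      Finset.measurable_prod Finset.univ fun i _ => hf.comp (measurable_pi_apply i)
    rw [show (∫⁻ a : α × (Fin n → α), f a.1 * ∏ x, f (a.2 x)
          ∂μ.prod (Measure.pi fun _ => μ))
        = (∫⁻ t, f t ∂μ) * ∫⁻ y : Fin n → α, ∏ x, f (y x) ∂(Measure.pi fun _ => μ) from
      lintegral_prod_mul hf.aemeasurable hg.aemeasurable, ih, pow_succ, mul_comm]

lemma quad_le_aux {n : ℕ} {lam : ℝ} {Q : Matrix (Fin n) (Fin n) ℝ} (hQ : Q.IsHermitian)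
    (h : ∀ μ ∈ spectrum ℝ Q, μ ≤ lam) (x : Fin n → ℝ) :
    x ⬝ᵥ Q *ᵥ x ≤ lam * (x ⬝ᵥ x) := by
  set M := algebraMap ℝ (Matrix (Fin n) (Fin n) ℝ) lam - Q with hM
  have hMh : M.IsHermitian := by
    apply Matrix.IsHermitian.sub _ hQ
    rw [Matrix.algebraMap_eq_diagonal]
    exact Matrix.isHermitian_diagonal _
  have heignn : ∀ i, 0 ≤ hMh.eigenvalues i := by
    intro i
    have hm' : hMh.eigenvalues i ∈ ({lam} : Set ℝ) - spectrum ℝ Q := by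
      rw [spectrum.singleton_sub_eq]
      exact hMh.eigenvalues_mem_spectrum_real i
    obtain ⟨a, ha, b, hb, hab⟩ := Set.mem_sub.mp hm'
    rw [Set.mem_singleton_iff] at ha
    subst ha
    rw [← hab]
    linarith [h b hb]
  have hps := hMh.posSemidef_iff_eigenvalues_nonneg.mpr heignn
  have h2 := hps.dotProduct_mulVec_nonneg x
  simp only [star_trivial] at h2
  rw [hM, Matrix.sub_mulVec, Algebra.algebraMap_eq_smul_one, smul_mulVec,
    Matrix.one_mulVec, dotProduct_sub, dotProduct_smul, smul_eq_mul] at h2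
  linarith

lemma quad_ge_aux {n : ℕ} {lam : ℝ} {Q : Matrix (Fin n) (Fin n) ℝ} (hQ : Q.IsHermitian)
    (h : ∀ μ ∈ spectrum ℝ Q, lam ≤ μ) (x : Fin n → ℝ) :
    lam * (x ⬝ᵥ x) ≤ x ⬝ᵥ Q *ᵥ x := by
  set M := Q - algebraMap ℝ (Matrix (Fin n) (Fin n) ℝ) lam with hM
  have hMh : M.IsHermitian := by
    apply Matrix.IsHermitian.sub hQ
    rw [Matrix.algebraMap_eq_diagonal]
    exact Matrix.isHermitian_diagonal _
  have heignn : ∀ i, 0 ≤ hMh.eigenvalues i := by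
    intro i
    have hm' : hMh.eigenvalues i ∈ spectrum ℝ Q - ({lam} : Set ℝ) := by
      rw [spectrum.sub_singleton_eq]
      exact hMh.eigenvalues_mem_spectrum_real i
    obtain ⟨a, ha, b, hb, hab⟩ := Set.mem_sub.mp hm'
    rw [Set.mem_singleton_iff] at hb
    subst hb
    rw [← hab]
    linarith [h a ha]
  have hps := hMh.posSemidef_iff_eigenvalues_nonneg.mpr heignn
  have h2 := hps.dotProduct_mulVec_nonneg x
  simp only [star_trivial] at h2
  rw [hM, Matrix.sub_mulVec, Algebra.algebraMap_eq_smul_one, smul_mulVec,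
    Matrix.one_mulVec, dotProduct_sub, dotProduct_smul, smul_eq_mul] at h2
  linarith

lemma lintegral_exp_aux {lam : ℝ} (hlam : 0 < lam) :
    ∫⁻ t : ℝ, ENNReal.ofReal (Real.exp (-(lam * t ^ 2) / 2))
      = ENNReal.ofReal (Real.sqrt (2 * π / lam)) := by
  have h : ∀ t : ℝ, -(lam * t ^ 2) / 2 = -(lam / 2) * t ^ 2 := fun t => by ring
  simp_rw [h]
  rw [← ofReal_integral_eq_lintegral_ofReal (integrable_exp_neg_mul_sq (by linarith))
    (ae_of_all _ fun t => (Real.exp_pos _).le), integral_gaussian]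
  congr 2
  rw [div_div_eq_mul_div, mul_comm]

theorem stmt_12 (n : ℕ) (lam₁ lam₂ : ℝ) (h₁ : 0 < lam₁) (h₁₂ : lam₁ ≤ lam₂)
    (Q : Matrix (Fin n) (Fin n) ℝ) (hsym : Q.IsSymm) (hpd : Q.PosDef)
    (heig : ∀ μ ∈ spectrum ℝ Q, μ ∈ Set.Icc lam₁ lam₂)
    (D : Set ℝ) (hD : MeasurableSet D) (hDpos : 0 < volume D) :
    ENNReal.ofReal ((lam₁ / lam₂) ^ ((n : ℝ) / 2)) *
        ((gaussianReal 0 1) ((fun x => Real.sqrt lam₂ * x) '' D)) ^ n *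
        gaussPrec n Q Set.univ
      ≤ gaussPrec n Q {x | ∀ i, x i ∈ D} := by
  have hlam₂ : 0 < lam₂ := lt_of_lt_of_le h₁ h₁₂
  have hQh : Q.IsHermitian := by
    rwa [Matrix.IsHermitian, Matrix.conjTranspose_eq_transpose_of_trivial]
  set f₁ : ℝ → ℝ≥0∞ := fun t => ENNReal.ofReal (Real.exp (-(lam₁ * t ^ 2) / 2)) with hf₁def
  set f₂ : ℝ → ℝ≥0∞ := fun t => ENNReal.ofReal (Real.exp (-(lam₂ * t ^ 2) / 2)) with hf₂def
  have hf₁ : Measurable f₁ := by fun_prop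
  have hf₂ : Measurable f₂ := by fun_prop
  have hdot : ∀ x : Fin n → ℝ, x ⬝ᵥ x = ∑ i, x i ^ 2 := by
    intro x
    simp [dotProduct, pow_two]
  have hsplit : ∀ (lam : ℝ) (x : Fin n → ℝ),
      -(lam * (x ⬝ᵥ x)) / 2 = ∑ i, -(lam * x i ^ 2) / 2 := by
    intro lam x
    rw [hdot, Finset.mul_sum]
    rw [← Finset.sum_div, ← Finset.sum_neg_distrib]
  -- upper bound for the total mass
  have hJ : ∫⁻ t, f₁ t = ENNReal.ofReal (Real.sqrt (2 * π / lam₁)) := lintegral_exp_aux h₁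
  have huniv : gaussPrec n Q Set.univ ≤ (ENNReal.ofReal (Real.sqrt (2 * π / lam₁))) ^ n := by
    rw [gaussPrec, withDensity_apply _ MeasurableSet.univ, Measure.restrict_univ]
    calc ∫⁻ x : Fin n → ℝ, ENNReal.ofReal (Real.exp (-(x ⬝ᵥ Q *ᵥ x) / 2))
        ≤ ∫⁻ x : Fin n → ℝ, ∏ i, f₁ (x i) := by
          apply lintegral_mono
          intro x
          have h1 : lam₁ * (x ⬝ᵥ x) ≤ x ⬝ᵥ Q *ᵥ x :=
            quad_ge_aux hQh (fun μ hμ => (heig μ hμ).1) x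
          have h2 : Real.exp (-(x ⬝ᵥ Q *ᵥ x) / 2)
              ≤ Real.exp (-(lam₁ * (x ⬝ᵥ x)) / 2) := by
            apply Real.exp_le_exp.mpr
            linarith
          refine le_trans (ENNReal.ofReal_le_ofReal h2) (le_of_eq ?_)
          rw [hsplit, Real.exp_sum,
            ENNReal.ofReal_prod_of_nonneg (fun i _ => (Real.exp_pos _).le)]
      _ = (∫⁻ t, f₁ t) ^ n := by
          rw [volume_pi, lintegral_pi_pow_aux volume hf₁ n]
      _ = (ENNReal.ofReal (Real.sqrt (2 * π / lam₁))) ^ n := by rw [hJ]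
  -- lower bound for the constrained mass
  set I : ℝ≥0∞ := ∫⁻ t in D, f₂ t with hIdef
  have hSm : MeasurableSet {x : Fin n → ℝ | ∀ i, x i ∈ D} := by
    have : {x : Fin n → ℝ | ∀ i, x i ∈ D} = Set.pi Set.univ (fun _ => D) := by
      ext x; simp [Set.mem_pi]
    rw [this]
    exact MeasurableSet.univ_pi fun _ => hD
  have hrhs : I ^ n ≤ gaussPrec n Q {x | ∀ i, x i ∈ D} := by
    rw [gaussPrec, withDensity_apply _ hSm]
    calc I ^ n = (∫⁻ t, D.indicator f₂ t) ^ n := by rw [lintegral_indicator hD]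
      _ = ∫⁻ x : Fin n → ℝ, ∏ i, D.indicator f₂ (x i) := by
          rw [volume_pi, lintegral_pi_pow_aux volume (hf₂.indicator hD) n]
      _ = ∫⁻ x : Fin n → ℝ,
            {x : Fin n → ℝ | ∀ i, x i ∈ D}.indicator (fun x => ∏ i, f₂ (x i)) x := by
          congr 1
          ext x
          by_cases hx : ∀ i, x i ∈ D
          · rw [Set.indicator_of_mem (show x ∈ {x : Fin n → ℝ | ∀ i, x i ∈ D} from hx)]
            exact Finset.prod_congr rfl fun i _ => Set.indicator_of_mem (hx i) _
          · rw [Set.indicator_of_notMem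
              (show x ∉ {x : Fin n → ℝ | ∀ i, x i ∈ D} from hx)]
            push_neg at hx
            obtain ⟨i, hi⟩ := hx
            exact Finset.prod_eq_zero (Finset.mem_univ i) (Set.indicator_of_notMem hi _)
      _ = ∫⁻ x in {x : Fin n → ℝ | ∀ i, x i ∈ D}, ∏ i, f₂ (x i) := by
          rw [lintegral_indicator hSm]
      _ ≤ ∫⁻ x in {x : Fin n → ℝ | ∀ i, x i ∈ D},
            ENNReal.ofReal (Real.exp (-(x ⬝ᵥ Q *ᵥ x) / 2)) := by
          apply lintegral_mono
          intro x
          have h1 : x ⬝ᵥ Q *ᵥ x ≤ lam₂ * (x ⬝ᵥ x) :=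
            quad_le_aux hQh (fun μ hμ => (heig μ hμ).2) x
          have h2 : Real.exp (-(lam₂ * (x ⬝ᵥ x)) / 2)
              ≤ Real.exp (-(x ⬝ᵥ Q *ᵥ x) / 2) := by
            apply Real.exp_le_exp.mpr
            linarith
          refine le_trans (le_of_eq ?_) (ENNReal.ofReal_le_ofReal h2)
          rw [hsplit, Real.exp_sum,
            ENNReal.ofReal_prod_of_nonneg (fun i _ => (Real.exp_pos _).le)]
  -- the gaussianReal term
  set c : ℝ := Real.sqrt lam₂ with hcdef
  have hc : 0 < c := Real.sqrt_pos.mpr hlam₂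
  have hG : (gaussianReal 0 1) ((fun x => c * x) '' D)
      = ENNReal.ofReal (c * (Real.sqrt (2 * π))⁻¹) * I := by
    have himD : MeasurableSet ((fun x => c * x) '' D) :=
      (measurableEmbedding_mulLeft₀ hc.ne').measurableSet_image' hD
    rw [gaussianReal_apply (0 : ℝ) one_ne_zero, ← lintegral_indicator himD]
    have hpdf : ∀ x : ℝ, gaussianPDF 0 1 x
        = ENNReal.ofReal ((Real.sqrt (2 * π))⁻¹ * Real.exp (-(x ^ 2) / 2)) := by
      intro x
      rw [gaussianPDF, gaussianPDFReal]
      norm_num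
    have hvol : (volume : Measure ℝ)
        = ENNReal.ofReal |c| • Measure.map (c * ·) volume :=
      (Real.smul_map_volume_mul_left hc.ne').symm
    rw [hvol, lintegral_smul_measure,
      (measurableEmbedding_mulLeft₀ hc.ne').lintegral_map]
    have hind : ∀ x : ℝ, ((fun x => c * x) '' D).indicator (gaussianPDF 0 1) (c * x)
        = D.indicator (fun t => gaussianPDF 0 1 (c * t)) x := by
      intro x
      by_cases hx : x ∈ D
      · rw [Set.indicator_of_mem hx, Set.indicator_of_mem (Set.mem_image_of_mem _ hx)]
      · rw [Set.indicator_of_notMem hx, Set.indicator_of_notMem]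
        rintro ⟨y, hy, he⟩
        exact hx (by rwa [mul_left_cancel₀ hc.ne' he] at hy)
    simp_rw [hind]
    rw [lintegral_indicator hD]
    have hcx : ∀ x : ℝ, gaussianPDF 0 1 (c * x)
        = ENNReal.ofReal (Real.sqrt (2 * π))⁻¹ * f₂ x := by
      intro x
      rw [hpdf, hf₂def]
      have : (c * x) ^ 2 = lam₂ * x ^ 2 := by
        rw [mul_pow, hcdef, Real.sq_sqrt hlam₂.le]
      rw [this, ENNReal.ofReal_mul (by positivity)]
    simp_rw [hcx]
    rw [lintegral_const_mul' _ _ ENNReal.ofReal_ne_top, ← hIdef, abs_of_pos hc,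
      ENNReal.ofReal_mul hc.le]
    ring
  -- combine
  have hconst : (lam₁ / lam₂) ^ ((n : ℝ) / 2)
      * ((c * (Real.sqrt (2 * π))⁻¹ * Real.sqrt (2 * π / lam₁)) ^ n) = 1 := by
    have h2pi : (0 : ℝ) < 2 * π := by positivity
    have hbase : c * (Real.sqrt (2 * π))⁻¹ * Real.sqrt (2 * π / lam₁)
        = Real.sqrt (lam₂ / lam₁) := by
      rw [Real.sqrt_div h2pi.le, Real.sqrt_div hlam₂.le, hcdef]
      field_simp
    rw [hbase]
    have hsq : Real.sqrt (lam₂ / lam₁) = (lam₂ / lam₁) ^ ((1 : ℝ) / 2) :=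
      Real.sqrt_eq_rpow _
    rw [hsq, ← Real.rpow_natCast ((lam₂ / lam₁) ^ ((1 : ℝ) / 2)) n,
      ← Real.rpow_mul (by positivity),
      show (1 : ℝ) / 2 * (n : ℝ) = (n : ℝ) / 2 by ring,
      ← Real.mul_rpow (by positivity) (by positivity),
      show lam₁ / lam₂ * (lam₂ / lam₁) = 1 by field_simp, Real.one_rpow]
  calc ENNReal.ofReal ((lam₁ / lam₂) ^ ((n : ℝ) / 2)) *
        ((gaussianReal 0 1) ((fun x => c * x) '' D)) ^ n * gaussPrec n Q Set.univ
      ≤ ENNReal.ofReal ((lam₁ / lam₂) ^ ((n : ℝ) / 2)) *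
        (ENNReal.ofReal (c * (Real.sqrt (2 * π))⁻¹) * I) ^ n *
        (ENNReal.ofReal (Real.sqrt (2 * π / lam₁))) ^ n := by
        rw [hG]
        exact mul_le_mul' le_rfl huniv
    _ = ENNReal.ofReal ((lam₁ / lam₂) ^ ((n : ℝ) / 2)
          * ((c * (Real.sqrt (2 * π))⁻¹ * Real.sqrt (2 * π / lam₁)) ^ n)) * I ^ n := by
        have hexp : ENNReal.ofReal ((lam₁ / lam₂) ^ ((n : ℝ) / 2)
            * ((c * (Real.sqrt (2 * π))⁻¹ * Real.sqrt (2 * π / lam₁)) ^ n))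
          = ENNReal.ofReal ((lam₁ / lam₂) ^ ((n : ℝ) / 2))
            * (ENNReal.ofReal (c * (Real.sqrt (2 * π))⁻¹)) ^ n
            * (ENNReal.ofReal (Real.sqrt (2 * π / lam₁))) ^ n := by
          rw [mul_pow, ENNReal.ofReal_mul (by positivity), ENNReal.ofReal_mul (by positivity),
            ENNReal.ofReal_pow (by positivity), ENNReal.ofReal_pow (by positivity), mul_assoc]
        rw [hexp]
        ring
    _ = I ^ n := by rw [hconst, ENNReal.ofReal_one, one_mul]
    _ ≤ gaussPrec n Q {x | ∀ i, x i ∈ D} := hrhs
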